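/- arXiv:0812.3894 — 3 statements merged into one kernel-verified Lean document; each statement's English description precedes it below -/
import Mathlib

section
/- For the N point source system, the angular momentum A = ∑_k Γ_k (z_k × ż_k) vanishes identically, where z × w denotes the cross product Re(i z̄ w) = (i z)·w of planar vectors. -/
open Finset

/-- Planar cross product of two complex numbers viewed as vectors in ℝ². -/
def cross (z w : ℂ) : ℝ := z.re * w.im - z.im * w.re

lemma cross_neg (u w : ℂ) : cross u (-w) = -cross u w := by
  simp [cross]; ring

lemma cross_sum {ι : Type*} (u : ℂ) (s : Finset ι) (f : ι → ℂ) :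
    cross u (∑ i ∈ s, f i) = ∑ i ∈ s, cross u (f i) := by
  simp [cross, Complex.re_sum, Complex.im_sum, Finset.mul_sum, Finset.sum_sub_distrib]

lemma cross_term (u w : ℂ) (c s : ℝ) :
    cross u ((c : ℂ) * (u - w) / ((s : ℂ))^2) = -(c * cross u w / s^2) := by
  have h : ((s : ℂ))^2 = ((s^2 : ℝ) : ℂ) := by push_cast; ring
  rw [h]
  rcases eq_or_ne (s^2) 0 with hs | hs
  · simp [cross, hs]
  · have : ((s^2 : ℝ) : ℂ) ≠ 0 := by exact_mod_cast hs
    simp only [cross, div_eq_mul_inv, ← Complex.ofReal_inv, Complex.mul_re, Complex.mul_im,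
      Complex.sub_re, Complex.sub_im, Complex.ofReal_re, Complex.ofReal_im]
    ring

theorem angular_momentum_vanishes (N : ℕ) (z : Fin N → ℝ → ℂ) (Γ : Fin N → ℝ)
    (hdist : ∀ t, ∀ k l : Fin N, k ≠ l → z k t ≠ z l t)
    (hode : ∀ (k : Fin N) (t : ℝ), HasDerivAt (z k)
      (-∑ l ∈ univ \ {k}, (Γ l : ℂ) * (z k t - z l t) / (‖z k t - z l t‖)^2) t) :
    ∀ t : ℝ, ∑ k, Γ k * cross (z k t) (deriv (z k) t) = 0 := by
  intro t
  set g : Fin N → Fin N → ℝ := fun k l =>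
    Γ k * Γ l * cross (z k t) (z l t) / (‖z k t - z l t‖)^2 with hg
  have hanti : ∀ k l, g l k = -g k l := by
    intro k l
    simp only [hg, cross]
    rw [norm_sub_rev]
    ring
  have hdiag : ∀ k, g k k = 0 := by
    intro k; simp [hg, cross, mul_comm]
  have hterm : ∀ k, Γ k * cross (z k t) (deriv (z k) t) = ∑ l ∈ univ \ {k}, g k l := by
    intro k
    rw [(hode k t).deriv, cross_neg, cross_sum, mul_neg, Finset.mul_sum,
      ← Finset.sum_neg_distrib]
    refine Finset.sum_congr rfl fun l _ => ?_
    rw [hg, cross_term (z k t) (z l t) (Γ l) (‖z k t - z l t‖)]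
    ring
  have hfull : ∀ k, ∑ l ∈ univ \ {k}, g k l = ∑ l, g k l := by
    intro k
    refine Finset.sum_subset (Finset.sdiff_subset) fun x _ hx => ?_
    have : x = k := by simpa using hx
    rw [this, hdiag]
  have hS : ∑ k, Γ k * cross (z k t) (deriv (z k) t) = ∑ k, ∑ l, g k l := by
    refine Finset.sum_congr rfl fun k _ => ?_
    rw [hterm, hfull]
  rw [hS]
  have h1 : ∑ k, ∑ l, g k l = ∑ l, ∑ k, g k l := Finset.sum_comm
  have h2 : ∑ l, ∑ k, g k l = -∑ k, ∑ l, g k l := by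
    rw [← Finset.sum_neg_distrib]
    refine Finset.sum_congr rfl fun l _ => ?_
    rw [← Finset.sum_neg_distrib]
    exact Finset.sum_congr rfl fun k _ => hanti l k
  have := h1.trans h2
  linarith
end

section
/- If Γ_1 + Γ_2 = 0, then for the two point source system the relative position z_1 - z_2 is constant, and consequently both sources move with the same constant velocity. -/
theorem two_sources_opposite_intensities (z₁ z₂ : ℝ → ℂ) (Γ₁ Γ₂ : ℝ)
    (hdist : ∀ t, z₁ t ≠ z₂ t)
    (h₁ : ∀ t, HasDerivAt z₁ (-(Γ₂ : ℂ) * (z₁ t - z₂ t) / (‖z₁ t - z₂ t‖)^2) t)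
    (h₂ : ∀ t, HasDerivAt z₂ (-(Γ₁ : ℂ) * (z₂ t - z₁ t) / (‖z₂ t - z₁ t‖)^2) t)
    (hΓ : Γ₁ + Γ₂ = 0) :
    (∀ t s : ℝ, z₁ t - z₂ t = z₁ s - z₂ s) ∧
    (∀ t : ℝ, deriv z₁ t = deriv z₂ t) ∧
    (∀ t s : ℝ, deriv z₁ t = deriv z₁ s) := by
  have hΓ' : (Γ₁ : ℂ) = -(Γ₂ : ℂ) := by
    have : Γ₁ = -Γ₂ := by linarith
    exact_mod_cast congrArg (Complex.ofReal) this
  have hw : ∀ t, HasDerivAt (fun t => z₁ t - z₂ t) 0 t := by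
    intro t
    have h := (h₁ t).sub (h₂ t)
    have habs : ‖z₂ t - z₁ t‖ = ‖z₁ t - z₂ t‖ := by
      exact norm_sub_rev _ _
    rw [habs] at h
    convert h using 1
    · rfl
    · rfl
    rw [hΓ']
    ring
  have hconst : ∀ t s : ℝ, z₁ t - z₂ t = z₁ s - z₂ s := by
    intro t s
    have := is_const_of_deriv_eq_zero (f := fun t => z₁ t - z₂ t)
      (fun x => (hw x).differentiableAt) (fun x => (hw x).deriv) t s
    simpa using this
  refine ⟨hconst, ?_, ?_⟩
  · intro t
    rw [(h₁ t).deriv, (h₂ t).deriv]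
    have habs : ‖z₂ t - z₁ t‖ = ‖z₁ t - z₂ t‖ := by
      exact norm_sub_rev _ _
    rw [habs, hΓ']
    ring_nf
  · intro t s
    rw [(h₁ t).deriv, (h₁ s).deriv, hconst t s]
end

section
/- For the three point source system in relative coordinates ξ = z_3 - z_1, η = z_3 - z_2, the time rescaling dt/ds = |ξ|² transforms the singular equations into dξ/ds = -(Γ_1+Γ_3)ξ - Γ_2|ξ|²/η̄ - Γ_2|ξ|²/(ξ̄-η̄), dη/ds = -Γ_1ξ - (Γ_2+Γ_3)|ξ|²/η̄ - Γ_1|ξ|²/(η̄-ξ̄), and the right-hand sides extend continuously to ξ = 0 (with η ≠ 0) with values (0, -Γ_1·0) = 0 and -Γ_1ξ respectively, i.e. the vector field is regular at binary collision ξ = 0. -/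
open Complex

theorem three_sources_blow_up (Γ₁ Γ₂ Γ₃ : ℝ) (z₁ z₂ z₃ : ℝ → ℂ)
    (hdist : ∀ t, z₁ t ≠ z₂ t ∧ z₁ t ≠ z₃ t ∧ z₂ t ≠ z₃ t)
    (h₁ : ∀ t, HasDerivAt z₁
      (-(Γ₂ : ℂ) / (starRingEnd ℂ (z₁ t) - starRingEnd ℂ (z₂ t))
        - (Γ₃ : ℂ) / (starRingEnd ℂ (z₁ t) - starRingEnd ℂ (z₃ t))) t)
    (h₂ : ∀ t, HasDerivAt z₂
      (-(Γ₁ : ℂ) / (starRingEnd ℂ (z₂ t) - starRingEnd ℂ (z₁ t))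
        - (Γ₃ : ℂ) / (starRingEnd ℂ (z₂ t) - starRingEnd ℂ (z₃ t))) t)
    (h₃ : ∀ t, HasDerivAt z₃
      (-(Γ₁ : ℂ) / (starRingEnd ℂ (z₃ t) - starRingEnd ℂ (z₁ t))
        - (Γ₂ : ℂ) / (starRingEnd ℂ (z₃ t) - starRingEnd ℂ (z₂ t))) t)
    (ξ η : ℝ → ℂ) (hξ : ∀ t, ξ t = z₃ t - z₁ t) (hη : ∀ t, η t = z₃ t - z₂ t)
    -- the blown-up right hand sides:
    (F₁ : ℂ → ℂ → ℂ) (F₂ : ℂ → ℂ → ℂ)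
    (hF₁ : ∀ x y : ℂ, F₁ x y = -((Γ₁ : ℂ) + Γ₃) * x
        - (Γ₂ : ℂ) * ‖x‖^2 / starRingEnd ℂ y
        - (Γ₂ : ℂ) * ‖x‖^2 / (starRingEnd ℂ x - starRingEnd ℂ y))
    (hF₂ : ∀ x y : ℂ, F₂ x y = -(Γ₁ : ℂ) * x
        - ((Γ₂ : ℂ) + Γ₃) * ‖x‖^2 / starRingEnd ℂ y
        - (Γ₁ : ℂ) * ‖x‖^2 / (starRingEnd ℂ y - starRingEnd ℂ x)) :
    -- (a) the time rescaling dt/ds = |ξ|² transforms the equations into dξ/ds = F₁, dη/ds = F₂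
    (∀ σ : ℝ → ℝ, (∀ s, HasDerivAt σ (‖ξ (σ s)‖^2) s) →
      ∀ s, HasDerivAt (fun s => ξ (σ s)) (F₁ (ξ (σ s)) (η (σ s))) s ∧
           HasDerivAt (fun s => η (σ s)) (F₂ (ξ (σ s)) (η (σ s))) s) ∧
    -- (b) the blown-up field is regular (continuous) at binary collision ξ = 0, with
    -- values F₁ 0 y = 0 and F₂ 0 y = -Γ₁ * 0 = 0
    (∀ y : ℂ, y ≠ 0 →
      ContinuousAt (fun p : ℂ × ℂ => (F₁ p.1 p.2, F₂ p.1 p.2)) (0, y) ∧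
      F₁ 0 y = 0 ∧ F₂ 0 y = -(Γ₁ : ℂ) * 0) := by
  constructor
  · intro σ hσ s
    obtain ⟨h12, h13, h23⟩ := hdist (σ s)
    set t := σ s with ht
    have hinj : Function.Injective (starRingEnd ℂ) := (starRingEnd ℂ).injective
    have hc31 : starRingEnd ℂ (z₃ t) - starRingEnd ℂ (z₁ t) ≠ 0 :=
      sub_ne_zero.mpr (fun h => h13 (hinj h).symm)
    have hc32 : starRingEnd ℂ (z₃ t) - starRingEnd ℂ (z₂ t) ≠ 0 :=
      sub_ne_zero.mpr (fun h => h23 (hinj h).symm)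
    have hc21 : starRingEnd ℂ (z₂ t) - starRingEnd ℂ (z₁ t) ≠ 0 :=
      sub_ne_zero.mpr (fun h => h12 (hinj h).symm)
    have hc12 : starRingEnd ℂ (z₁ t) - starRingEnd ℂ (z₂ t) ≠ 0 :=
      sub_ne_zero.mpr (fun h => h12 (hinj h))
    have hc13 : starRingEnd ℂ (z₁ t) - starRingEnd ℂ (z₃ t) ≠ 0 :=
      sub_ne_zero.mpr (fun h => h13 (hinj h))
    have hc23 : starRingEnd ℂ (z₂ t) - starRingEnd ℂ (z₃ t) ≠ 0 :=
      sub_ne_zero.mpr (fun h => h23 (hinj h))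
    have e1 : ξ = fun u => z₃ u - z₁ u := funext hξ
    have e2 : η = fun u => z₃ u - z₂ u := funext hη
    have hcx : starRingEnd ℂ (ξ t) = starRingEnd ℂ (z₃ t) - starRingEnd ℂ (z₁ t) := by
      rw [hξ, map_sub]
    have hcy : starRingEnd ℂ (η t) = starRingEnd ℂ (z₃ t) - starRingEnd ℂ (z₂ t) := by
      rw [hη, map_sub]
    have habs : ((‖ξ t‖ : ℂ))^2
        = ξ t * (starRingEnd ℂ (z₃ t) - starRingEnd ℂ (z₁ t)) := by
      rw [← hcx, Complex.mul_conj]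
      norm_cast
      exact Complex.sq_norm _
    have Dξ : HasDerivAt ξ
        ((-(Γ₁ : ℂ) / (starRingEnd ℂ (z₃ t) - starRingEnd ℂ (z₁ t))
          - (Γ₂ : ℂ) / (starRingEnd ℂ (z₃ t) - starRingEnd ℂ (z₂ t)))
         - (-(Γ₂ : ℂ) / (starRingEnd ℂ (z₁ t) - starRingEnd ℂ (z₂ t))
          - (Γ₃ : ℂ) / (starRingEnd ℂ (z₁ t) - starRingEnd ℂ (z₃ t)))) t := by
      rw [e1]; exact (h₃ t).sub (h₁ t)
    have Dη : HasDerivAt η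
        ((-(Γ₁ : ℂ) / (starRingEnd ℂ (z₃ t) - starRingEnd ℂ (z₁ t))
          - (Γ₂ : ℂ) / (starRingEnd ℂ (z₃ t) - starRingEnd ℂ (z₂ t)))
         - (-(Γ₁ : ℂ) / (starRingEnd ℂ (z₂ t) - starRingEnd ℂ (z₁ t))
          - (Γ₃ : ℂ) / (starRingEnd ℂ (z₂ t) - starRingEnd ℂ (z₃ t)))) t := by
      rw [e2]; exact (h₃ t).sub (h₂ t)
    constructor
    · have := Dξ.scomp s (hσ s)
      convert this using 1
      case e'_4 => rfl
      case e'_8 => rfl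
      rw [Complex.real_smul, hF₁, hcx, hcy]
      push_cast
      rw [habs]
      rw [sub_sub_sub_cancel_left]
      field_simp
      ring
    · have := Dη.scomp s (hσ s)
      convert this using 1
      case e'_4 => rfl
      case e'_8 => rfl
      rw [Complex.real_smul, hF₂, hcx, hcy]
      push_cast
      rw [habs]
      rw [sub_sub_sub_cancel_left]
      field_simp
      ring
  · intro y hy
    have hy' : starRingEnd ℂ y ≠ 0 := fun h => hy ((starRingEnd ℂ).injective (by simpa using h))
    refine ⟨?_, by rw [hF₁]; simp, by rw [hF₂]; simp⟩
    have e1 : (fun p : ℂ × ℂ => F₁ p.1 p.2)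
        = fun p : ℂ × ℂ => -((Γ₁ : ℂ) + Γ₃) * p.1
          - (Γ₂ : ℂ) * (‖p.1‖ : ℂ)^2 / starRingEnd ℂ p.2
          - (Γ₂ : ℂ) * (‖p.1‖ : ℂ)^2 / (starRingEnd ℂ p.1 - starRingEnd ℂ p.2) :=
      funext fun p => hF₁ p.1 p.2
    have e2 : (fun p : ℂ × ℂ => F₂ p.1 p.2)
        = fun p : ℂ × ℂ => -(Γ₁ : ℂ) * p.1
          - ((Γ₂ : ℂ) + Γ₃) * (‖p.1‖ : ℂ)^2 / starRingEnd ℂ p.2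
          - (Γ₁ : ℂ) * (‖p.1‖ : ℂ)^2 / (starRingEnd ℂ p.2 - starRingEnd ℂ p.1) :=
      funext fun p => hF₂ p.1 p.2
    apply ContinuousAt.prodMk
    · rw [e1]
      refine ContinuousAt.sub (ContinuousAt.sub (by fun_prop) ?_) ?_
      · exact ContinuousAt.div (continuous_const.mul ((Complex.continuous_ofReal.comp (continuous_norm.comp continuous_fst)).pow 2)).continuousAt ((Complex.continuous_conj.comp continuous_snd).continuousAt) (by simpa using hy')
      · exact ContinuousAt.div (continuous_const.mul ((Complex.continuous_ofReal.comp (continuous_norm.comp continuous_fst)).pow 2)).continuousAt (((Complex.continuous_conj.comp continuous_fst).sub (Complex.continuous_conj.comp continuous_snd)).continuousAt) (by simp [hy'])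
    · rw [e2]
      refine ContinuousAt.sub (ContinuousAt.sub (by fun_prop) ?_) ?_
      · exact ContinuousAt.div (continuous_const.mul ((Complex.continuous_ofReal.comp (continuous_norm.comp continuous_fst)).pow 2)).continuousAt ((Complex.continuous_conj.comp continuous_snd).continuousAt) (by simpa using hy')
      · exact ContinuousAt.div (continuous_const.mul ((Complex.continuous_ofReal.comp (continuous_norm.comp continuous_fst)).pow 2)).continuousAt (((Complex.continuous_conj.comp continuous_snd).sub (Complex.continuous_conj.comp continuous_fst)).continuousAt) (by simp [hy'])
end
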